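/- For fixed k > 0, x₂ > 0, the function α ↦ e^{-i√(k²-α²)·x₂} on the interval (k-δ, k+δ) (where √(k²-α²) denotes the root with nonnegative real and imaginary parts) can be decomposed as φ₁(α) + √(α-k)·φ₂(α), where φ₁(α) = cosh(-i√(k²-α²)x₂) and φ₂(α) = -sinc~(-i√(k²-α²)x₂)·√(α+k)·x₂ are both real-analytic in α on (k-δ, k+δ) for δ < 2k; here √(α-k) denotes the root √(α-k) for α ≥ k and i√(k-α) for α < k (consistent with the branch choice). -/

import Mathlib

open scoped Nat


/-- The regularized hyperbolic sinc function. -/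
noncomputable def sincTilde (z : ℂ) : ℂ := if z = 0 then 1 else Complex.sinh z / z

/-- The branch of `√(α - k)`: `√(α-k)` for `α ≥ k` and `i√(k-α)` for `α < k`. -/
noncomputable def sqrtBranch (k α : ℝ) : ℂ :=
  if k ≤ α then (Real.sqrt (α - k) : ℂ) else Complex.I * (Real.sqrt (k - α) : ℂ)

/-- The compatible branch of `√(k² - α²)`, factorized as
`-i · √(α-k)-branch · √(α+k)`. -/
noncomputable def betaBranch (k α : ℝ) : ℂ :=
  -Complex.I * sqrtBranch k α * (Real.sqrt (α + k) : ℂ)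

noncomputable def coshCoef : ℕ → ℂ := fun n => (((2*n)! : ℂ))⁻¹
noncomputable def sincCoef : ℕ → ℂ := fun n => (((2*n+1)! : ℂ))⁻¹

lemma radius_top_of_le (c : ℕ → ℂ) (h : ∀ n, ‖c n‖ ≤ ((n)! : ℝ)⁻¹) :
    (FormalMultilinearSeries.ofScalars ℂ c).radius = ⊤ := by
  refine FormalMultilinearSeries.radius_eq_top_of_summable_norm _ fun r => ?_
  refine Summable.of_nonneg_of_le (fun n => by positivity) (fun n => ?_)
    (Real.summable_pow_div_factorial r)
  rw [FormalMultilinearSeries.ofScalars_norm]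
  calc ‖c n‖ * (r:ℝ)^n ≤ ((n)! : ℝ)⁻¹ * (r:ℝ)^n := by gcongr; exact h n
    _ = (r:ℝ)^n / (n)! := by ring

lemma coshCoef_radius : (FormalMultilinearSeries.ofScalars ℂ coshCoef).radius = ⊤ := by
  apply radius_top_of_le
  intro n
  simp only [coshCoef, norm_inv, Complex.norm_natCast]
  gcongr
  all_goals first
    | omega
    | positivity
    | exact_mod_cast Nat.factorial_pos n
    | exact_mod_cast Nat.factorial_le (by omega)

lemma sincCoef_radius : (FormalMultilinearSeries.ofScalars ℂ sincCoef).radius = ⊤ := by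
  apply radius_top_of_le
  intro n
  simp only [sincCoef, norm_inv, Complex.norm_natCast]
  gcongr
  all_goals first
    | omega
    | positivity
    | exact_mod_cast Nat.factorial_pos n
    | exact_mod_cast Nat.factorial_le (by omega)

noncomputable def coshFun : ℂ → ℂ := FormalMultilinearSeries.ofScalarsSum coshCoef
noncomputable def sincFun : ℂ → ℂ := FormalMultilinearSeries.ofScalarsSum sincCoef

lemma coshFun_analytic (z : ℂ) : AnalyticAt ℂ coshFun z := by
  have h := (FormalMultilinearSeries.ofScalars ℂ coshCoef).hasFPowerSeriesOnBall
    (by rw [coshCoef_radius]; exact ENNReal.zero_lt_top)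
  exact h.analyticOnNhd z (by simp [coshCoef_radius])

lemma sincFun_analytic (z : ℂ) : AnalyticAt ℂ sincFun z := by
  have h := (FormalMultilinearSeries.ofScalars ℂ sincCoef).hasFPowerSeriesOnBall
    (by rw [sincCoef_radius]; exact ENNReal.zero_lt_top)
  exact h.analyticOnNhd z (by simp [sincCoef_radius])

lemma hasSum_cosh_sq (z : ℂ) :
    HasSum (fun n : ℕ => (z^2)^n / ((2*n)! : ℂ)) (Complex.cosh z) := by
  have h := Complex.hasSum_cos' (z * Complex.I)
  rw [Complex.cos_mul_I] at h
  convert h using 2 with n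
  rw [mul_assoc, Complex.I_mul_I, mul_neg_one, Even.neg_pow ⟨n, by ring⟩, ← pow_mul]

lemma hasSum_sinh_sq (z : ℂ) :
    HasSum (fun n : ℕ => z^(2*n+1) / ((2*n+1)! : ℂ)) (Complex.sinh z) := by
  have h := (Complex.hasSum_sin' (z * Complex.I)).div_const Complex.I
  rw [Complex.sin_mul_I, mul_div_cancel_right₀ _ Complex.I_ne_zero] at h
  convert h using 2 with n
  · rfl
  rw [mul_assoc, Complex.I_mul_I, mul_neg_one, Odd.neg_pow ⟨n, by ring⟩]
  simp only [div_div, mul_assoc, Complex.I_mul_I, mul_neg_one, div_neg, neg_div, neg_neg]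

lemma coshFun_sq (z : ℂ) : Complex.cosh z = coshFun (z^2) := by
  rw [coshFun, FormalMultilinearSeries.ofScalars_sum_eq]
  refine (HasSum.tsum_eq ?_).symm
  convert hasSum_cosh_sq z using 2 with n
  · rfl
  simp [coshCoef, smul_eq_mul, div_eq_inv_mul]

lemma sincFun_sq (z : ℂ) : sincTilde z = sincFun (z^2) := by
  rcases eq_or_ne z 0 with rfl | hz
  · simp [sincTilde, sincFun, sincCoef]
  · rw [sincTilde, if_neg hz, sincFun, FormalMultilinearSeries.ofScalars_sum_eq]
    refine (HasSum.tsum_eq ?_).symm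
    have h := (hasSum_sinh_sq z).div_const z
    convert h using 2 with n
    rw [sincCoef, smul_eq_mul, ← pow_mul, div_div,
      eq_div_iff (mul_ne_zero (Nat.cast_ne_zero.mpr (Nat.factorial_ne_zero _)) hz)]
    field_simp
    rw [mul_assoc,
      mul_div_cancel_left₀ _ (Nat.cast_ne_zero.mpr (Nat.factorial_ne_zero _) : ((2*n+1)! : ℂ) ≠ 0),
      ← pow_succ]

theorem exp_decomposition_near_k (k x₂ δ : ℝ) (hk : 0 < k) (hx₂ : 0 < x₂)
    (hδ : 0 < δ) (hδ' : δ < 2 * k) :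
    (∀ α ∈ Set.Ioo (k - δ) (k + δ),
        Complex.exp (-Complex.I * betaBranch k α * (x₂ : ℂ)) =
          Complex.cosh (-Complex.I * betaBranch k α * (x₂ : ℂ)) +
            sqrtBranch k α *
              (-(sincTilde (-Complex.I * betaBranch k α * (x₂ : ℂ))) *
                (Real.sqrt (α + k) : ℂ) * (x₂ : ℂ))) ∧
      AnalyticOnNhd ℝ
        (fun α : ℝ => Complex.cosh (-Complex.I * betaBranch k α * (x₂ : ℂ)))
        (Set.Ioo (k - δ) (k + δ)) ∧
      AnalyticOnNhd ℝ
        (fun α : ℝ => -(sincTilde (-Complex.I * betaBranch k α * (x₂ : ℂ))) *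
          (Real.sqrt (α + k) : ℂ) * (x₂ : ℂ))
        (Set.Ioo (k - δ) (k + δ)) := by
  -- basic facts
  have hpos : ∀ α ∈ Set.Ioo (k - δ) (k + δ), 0 < α + k := by
    intro α hα
    have := hα.1
    linarith
  -- the value of z = -I * β * x₂
  have hzval : ∀ α : ℝ, -Complex.I * betaBranch k α * (x₂ : ℂ) =
      -(sqrtBranch k α * (Real.sqrt (α + k) : ℂ) * (x₂ : ℂ)) := by
    intro α
    unfold betaBranch
    ring_nf
    rw [Complex.I_sq]
    ring
  -- sinh via sincTilde
  have hsinh : ∀ z : ℂ, Complex.sinh z = sincTilde z * z := by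
    intro z
    rcases eq_or_ne z 0 with rfl | hz
    · simp
    · rw [sincTilde, if_neg hz, div_mul_cancel₀ _ hz]
  -- square of z
  have hsq : ∀ α ∈ Set.Ioo (k - δ) (k + δ),
      (-Complex.I * betaBranch k α * (x₂ : ℂ))^2 =
        ((( α - k) * (α + k) * x₂^2 : ℝ) : ℂ) := by
    intro α hα
    rw [hzval α, neg_pow, mul_pow, mul_pow]
    have hr : ((Real.sqrt (α + k) : ℝ) : ℂ)^2 = ((α + k : ℝ) : ℂ) := by
      norm_cast
      exact Real.sq_sqrt (hpos α hα).le
    have hs : (sqrtBranch k α)^2 = ((α - k : ℝ) : ℂ) := by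
      unfold sqrtBranch
      split_ifs with h'
      · norm_cast
        exact Real.sq_sqrt (by linarith)
      · rw [mul_pow, Complex.I_sq]
        rw [show ((Real.sqrt (k - α) : ℝ) : ℂ)^2 = ((k - α : ℝ) : ℂ) by
          norm_cast; exact Real.sq_sqrt (by linarith)]
        push_cast
        ring
    rw [hr, hs]
    push_cast
    ring
  -- inner analytic map
  have hG : ∀ α : ℝ, AnalyticAt ℝ (fun α : ℝ => (((α - k) * (α + k) * x₂^2 : ℝ) : ℂ)) α := by
    intro α
    have h1 : AnalyticAt ℝ (fun α : ℝ => (α - k) * (α + k) * x₂^2) α :=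
      (((analyticAt_id).sub analyticAt_const).mul
        ((analyticAt_id).add analyticAt_const)).mul analyticAt_const
    exact (Complex.ofRealCLM.analyticAt _).comp h1
  refine ⟨?_, ?_, ?_⟩
  · -- the identity
    intro α hα
    rw [← Complex.cosh_add_sinh]
    congr 1
    rw [hsinh, hzval α]
    ring
  · -- analyticity of the cosh part
    refine AnalyticOnNhd.congr isOpen_Ioo (f := fun α : ℝ =>
      coshFun ((((α - k) * (α + k) * x₂^2 : ℝ)) : ℂ)) ?_ ?_
    · intro α _
      exact (((coshFun_analytic _).restrictScalars (𝕜 := ℝ)).comp (hG α))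
    · intro α hα
      simp only
      rw [coshFun_sq, hsq α hα]
  · -- analyticity of the sinc part
    refine AnalyticOnNhd.congr isOpen_Ioo (f := fun α : ℝ =>
      -(sincFun ((((α - k) * (α + k) * x₂^2 : ℝ)) : ℂ)) *
        (((α : ℂ) + (k : ℂ)) ^ ((1 : ℂ)/2)) * (x₂ : ℂ)) ?_ ?_
    · intro α hα
      have h1 : AnalyticAt ℝ (fun α : ℝ =>
          sincFun ((((α - k) * (α + k) * x₂^2 : ℝ)) : ℂ)) α :=
        (((sincFun_analytic _).restrictScalars (𝕜 := ℝ)).comp (hG α))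
      have h2 : AnalyticAt ℝ (fun α : ℝ => ((α : ℂ) + (k : ℂ)) ^ ((1 : ℂ)/2)) α := by
        have houter : AnalyticAt ℂ (fun z : ℂ => z ^ ((1 : ℂ)/2)) ((α : ℂ) + (k : ℂ)) := by
          refine AnalyticAt.cpow analyticAt_id analyticAt_const ?_
          rw [Complex.mem_slitPlane_iff]
          left
          simp only [Complex.add_re, Complex.ofReal_re]
          exact hpos α hα
        have hinner : AnalyticAt ℝ (fun α : ℝ => (α : ℂ) + (k : ℂ)) α :=
          (Complex.ofRealCLM.analyticAt _).add analyticAt_const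
        have h2' : AnalyticAt ℝ ((fun z : ℂ => z ^ ((1 : ℂ)/2)) ∘ (fun α : ℝ => (α : ℂ) + (k : ℂ))) α :=
          AnalyticAt.comp (f := fun α : ℝ => (α : ℂ) + (k : ℂ)) (x := α)
            (houter.restrictScalars (𝕜 := ℝ)) hinner
        exact h2'
      exact (h1.neg.mul h2).mul analyticAt_const
    · intro α hα
      simp only
      rw [sincFun_sq, hsq α hα]
      congr 2
      rw [Real.sqrt_eq_rpow, Complex.ofReal_cpow (hpos α hα).le]
      push_cast
      ring_nf
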